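/- Let f: {−1,1}^n → [−1,1], let t be a nonnegative integer, let 0 < p ≤ 1, and let ρ be a random restriction with parameter p. Then L_{1,t}(f) ≤ (1/p)^t · E_ρ[L_{1,t}(f|ρ)], where L_{1,t}(g) = ∑_{|S|=t} |ĝ(S)|. -/

import Mathlib

/-- Fourier coefficient `f̂(S) = E_x[f(x)·χ_S(x)]` of `f : {−1,1}^n → ℝ`,
identifying `{0,1}` with `{−1,1}` via `b ↦ 2b−1` (`true ↦ 1`, `false ↦ −1`). -/
noncomputable def pbFourier {n : ℕ} (f : (Fin n → Bool) → ℝ)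
    (S : Finset (Fin n)) : ℝ :=
  (∑ x : Fin n → Bool, f x * ∏ i ∈ S, (if x i then (1 : ℝ) else -1)) / 2 ^ n

/-- The restriction `f|ρ` of `f` by `ρ : Fin n → Option Bool` (`none` = `★`,
i.e. a live variable); dead variables are fixed according to `ρ`. -/
def restrictFun {n : ℕ} (f : (Fin n → Bool) → ℝ) (ρ : Fin n → Option Bool) :
    (Fin n → Bool) → ℝ :=
  fun x => f fun i => (ρ i).getD (x i)

lemma fun_sum_split {n : ℕ} (F : (Fin n → Option Bool × Bool) → ℝ) :
    ∑ c : Fin n → Option Bool × Bool, F c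
      = ∑ ρ : Fin n → Option Bool, ∑ x : Fin n → Bool, F (fun i => (ρ i, x i)) := by
  calc ∑ c : Fin n → Option Bool × Bool, F c
      = ∑ pr : (Fin n → Option Bool) × (Fin n → Bool), F (fun i => (pr.1 i, pr.2 i)) :=
        Fintype.sum_equiv (Equiv.arrowProdEquivProdArrow (Fin n) (fun _ => Option Bool) (fun _ => Bool))
          F (fun pr => F (fun i => (pr.1 i, pr.2 i))) (fun c => rfl)
    _ = ∑ ρ : Fin n → Option Bool, ∑ x : Fin n → Bool, F (fun i => (ρ i, x i)) :=
        Fintype.sum_prod_type _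

lemma key_identity {n : ℕ} (p : ℝ) (f : (Fin n → Bool) → ℝ) (S : Finset (Fin n)) :
    ∑ ρ : Fin n → Option Bool,
      (∏ i, if ρ i = none then p else (1 - p) / 2) * pbFourier (restrictFun f ρ) S
    = p ^ S.card * pbFourier f S := by
  set G : Fin n → Option Bool × Bool → ℝ := fun i z =>
    (if z.1 = none then p else (1 - p) / 2) *
      (if i ∈ S then (if z.2 then (1:ℝ) else -1) else 1) with hG
  have main :
      ∑ ρ : Fin n → Option Bool, (∏ i, if ρ i = none then p else (1 - p) / 2) *
        (∑ x : Fin n → Bool, restrictFun f ρ x * ∏ i ∈ S, (if x i then (1:ℝ) else -1))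
      = p ^ S.card * ∑ y : Fin n → Bool, f y * ∏ i ∈ S, (if y i then (1:ℝ) else -1) := by
    calc
      ∑ ρ : Fin n → Option Bool, (∏ i, if ρ i = none then p else (1 - p) / 2) *
          (∑ x : Fin n → Bool, restrictFun f ρ x * ∏ i ∈ S, (if x i then (1:ℝ) else -1))
        = ∑ c : Fin n → Option Bool × Bool,
            f (fun i => ((c i).1).getD ((c i).2)) * ∏ i, G i (c i) := by
          rw [fun_sum_split]
          refine Finset.sum_congr rfl fun ρ _ => ?_
          rw [Finset.mul_sum]
          refine Finset.sum_congr rfl fun x _ => ?_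
          simp only [restrictFun, hG, Finset.prod_mul_distrib,
            Finset.prod_ite_mem Finset.univ S, Finset.univ_inter]
          ring
      _ = ∑ y : Fin n → Bool, ∑ c ∈ Finset.univ.filter
            (fun c : Fin n → Option Bool × Bool =>
              (fun i => ((c i).1).getD ((c i).2)) = y),
            f (fun i => ((c i).1).getD ((c i).2)) * ∏ i, G i (c i) := by
          rw [Finset.sum_fiberwise]
      _ = ∑ y : Fin n → Bool, f y *
            ∑ c : Fin n → Option Bool × Bool,
              ∏ i, (if ((c i).1).getD ((c i).2) = y i then G i (c i) else 0) := by
          refine Finset.sum_congr rfl fun y _ => ?_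
          rw [Finset.mul_sum, Finset.sum_filter]
          refine Finset.sum_congr rfl fun c _ => ?_
          by_cases h : (fun i => ((c i).1).getD ((c i).2)) = y
          · rw [if_pos h, h]
            congr 1
            refine Finset.prod_congr rfl fun i _ => ?_
            rw [if_pos (congrFun h i)]
          · rw [if_neg h]
            obtain ⟨j, hj⟩ := Function.ne_iff.mp h
            rw [Finset.prod_eq_zero (Finset.mem_univ j) (by rw [if_neg hj]), mul_zero]
      _ = ∑ y : Fin n → Bool, f y *
            ∏ i, ∑ z : Option Bool × Bool,
              (if z.1.getD z.2 = y i then G i z else 0) := by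
          refine Finset.sum_congr rfl fun y _ => ?_
          rw [Finset.prod_univ_sum (fun _ => Finset.univ), Fintype.piFinset_univ]
      _ = ∑ y : Fin n → Bool, f y *
            ∏ i, (if i ∈ S then p * (if y i then (1:ℝ) else -1) else 1) := by
          refine Finset.sum_congr rfl fun y _ => ?_
          congr 1
          refine Finset.prod_congr rfl fun i _ => ?_
          rw [hG]
          rcases hyi : y i <;> by_cases hiS : i ∈ S <;>
            simp [Fintype.sum_prod_type, hyi, hiS]
      _ = p ^ S.card * ∑ y : Fin n → Bool, f y * ∏ i ∈ S, (if y i then (1:ℝ) else -1) := by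
          rw [Finset.mul_sum]
          refine Finset.sum_congr rfl fun y _ => ?_
          rw [Finset.prod_ite_mem Finset.univ S, Finset.univ_inter,
            Finset.prod_mul_distrib, Finset.prod_const]
          ring
  simp only [pbFourier, ← mul_div_assoc]
  rw [← Finset.sum_div, main]

/-- for `f : {−1,1}^n → [−1,1]`, a nonnegative integer `t`, and a
random restriction `ρ` with parameter `0 < p ≤ 1`,
`L_{1,t}(f) ≤ (1/p)^t · E_ρ[L_{1,t}(f|ρ)]`, where `L_{1,t}(g) = ∑_{|S|=t} |ĝ(S)|`. -/
theorem l1t_random_restriction_bound (n t : ℕ) (p : ℝ) (hp0 : 0 < p) (hp1 : p ≤ 1)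
    (f : (Fin n → Bool) → ℝ) (hf : ∀ x, f x ∈ Set.Icc (-1 : ℝ) 1) :
    ∑ S ∈ Finset.univ.filter (fun S : Finset (Fin n) => S.card = t),
        |pbFourier f S|
      ≤ (1 / p) ^ t *
        ∑ ρ : Fin n → Option Bool,
          (∏ i, if ρ i = none then p else (1 - p) / 2) *
            ∑ S ∈ Finset.univ.filter (fun S : Finset (Fin n) => S.card = t),
              |pbFourier (restrictFun f ρ) S| := by
  have hw : ∀ ρ : Fin n → Option Bool,
      0 ≤ ∏ i, (if ρ i = none then p else (1 - p) / 2) := fun ρ =>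
    Finset.prod_nonneg fun i _ => by
      split
      · exact hp0.le
      · linarith
  have hS : ∀ S ∈ Finset.univ.filter (fun S : Finset (Fin n) => S.card = t),
      |pbFourier f S| ≤ (1 / p) ^ t * ∑ ρ : Fin n → Option Bool,
        (∏ i, if ρ i = none then p else (1 - p) / 2) *
          |pbFourier (restrictFun f ρ) S| := by
    intro S hSm
    rw [Finset.mem_filter] at hSm
    have h1 : p ^ t * |pbFourier f S|
        = |∑ ρ : Fin n → Option Bool,
            (∏ i, if ρ i = none then p else (1 - p) / 2) *
              pbFourier (restrictFun f ρ) S| := by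
      rw [key_identity, abs_mul, abs_of_pos (pow_pos hp0 _), hSm.2]
    have h2 : |∑ ρ : Fin n → Option Bool,
            (∏ i, if ρ i = none then p else (1 - p) / 2) *
              pbFourier (restrictFun f ρ) S|
        ≤ ∑ ρ : Fin n → Option Bool,
            (∏ i, if ρ i = none then p else (1 - p) / 2) *
              |pbFourier (restrictFun f ρ) S| := by
      refine (Finset.abs_sum_le_sum_abs _ _).trans (Finset.sum_le_sum fun ρ _ => ?_)
      rw [abs_mul, abs_of_nonneg (hw ρ)]
    have hpt : (0:ℝ) < p ^ t := pow_pos hp0 _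
    rw [one_div, inv_pow, ← div_eq_inv_mul, le_div_iff₀ hpt, mul_comm]
    exact h1.le.trans h2
  calc ∑ S ∈ Finset.univ.filter (fun S : Finset (Fin n) => S.card = t), |pbFourier f S|
      ≤ ∑ S ∈ Finset.univ.filter (fun S : Finset (Fin n) => S.card = t),
          (1 / p) ^ t * ∑ ρ : Fin n → Option Bool,
            (∏ i, if ρ i = none then p else (1 - p) / 2) *
              |pbFourier (restrictFun f ρ) S| := Finset.sum_le_sum hS
    _ = (1 / p) ^ t *
        ∑ ρ : Fin n → Option Bool,
          (∏ i, if ρ i = none then p else (1 - p) / 2) *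
            ∑ S ∈ Finset.univ.filter (fun S : Finset (Fin n) => S.card = t),
              |pbFourier (restrictFun f ρ) S| := by
        rw [← Finset.mul_sum, Finset.sum_comm]
        congr 1
        exact Finset.sum_congr rfl fun ρ _ => (Finset.mul_sum _ _ _).symm
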